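/- For real w_1, w_2, w_3, the two-dimensional integral B_2(w) = ∫_{ℝ²} dv_1 dv_2 · (v_1 − v_2)·sinh(v_1 − v_2) / ∏_{j=1}^{3} ∏_{k=1}^{2} cosh(w_j − v_k) equals 4·∏_{1 ≤ j < k ≤ 3} (w_j − w_k)/sinh(w_j − w_k), with each ratio interpreted as 1 when w_j = w_k. -/

import Mathlib

open MeasureTheory

/-- `x/sinh x`, extended by `1` at `x = 0`. -/
noncomputable def shr (x : ℝ) : ℝ := if x = 0 then 1 else x / Real.sinh x

open Real Set Filter

/-- exp(-a|x|) is integrable for a > 0. -/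
lemma integrable_exp_neg_abs {a : ℝ} (ha : 0 < a) :
    Integrable (fun x : ℝ => Real.exp (-(a * |x|))) := by
  have h1 : IntegrableOn (fun x : ℝ => Real.exp (-(a * |x|))) (Ici 0) := by
    have h0 := exp_neg_integrableOn_Ioi 0 ha
    have h2 : IntegrableOn (fun x : ℝ => Real.exp (-(a * x))) (Ici 0) := by
      rw [integrableOn_Ici_iff_integrableOn_Ioi]
      exact h0.congr_fun (fun x _ => by ring_nf) measurableSet_Ioi
    refine h2.congr_fun (fun x hx => ?_) measurableSet_Ici
    rw [abs_of_nonneg hx]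
  have h_map_neg : (volume.restrict (Ici (0:ℝ))).map Neg.neg = volume.restrict (Iic 0) := by
    conv => rhs; rw [← Measure.map_neg_eq_self (volume : Measure ℝ),
      measurableEmbedding_neg.restrict_map]
    simp
  have h3 : IntegrableOn (fun x : ℝ => Real.exp (-(a * |x|))) (Iic 0) := by
    rw [IntegrableOn, ← h_map_neg, measurableEmbedding_neg.integrable_map_iff]
    exact h1.congr_fun (fun x _ => by simp) measurableSet_Ici
  rw [← integrableOn_univ, ← Iic_union_Ici (a := (0:ℝ))]
  exact h3.union h1

lemma measurable_dl_integrand : Measurable (fun t : ℝ => Real.log (1 + t) / t) :=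
  (Real.measurable_log.comp (measurable_const.add measurable_id)).div measurable_id

/-- The dilogarithm-type function `dl x = ∫_0^x log(1+t)/t dt`. -/
noncomputable def dl (x : ℝ) : ℝ := ∫ t in (0:ℝ)..x, Real.log (1 + t) / t

lemma dl_integrand_nonneg {t : ℝ} (ht : 0 < t) : 0 ≤ Real.log (1 + t) / t :=
  div_nonneg (Real.log_nonneg (by linarith)) ht.le

lemma dl_integrand_le_one {t : ℝ} (ht : 0 < t) : Real.log (1 + t) / t ≤ 1 := by
  rw [div_le_one ht]
  have := Real.log_le_sub_one_of_pos (x := 1 + t) (by linarith)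
  linarith

lemma dl_intervalIntegrable {x : ℝ} (hx : 0 ≤ x) :
    IntervalIntegrable (fun t => Real.log (1 + t) / t) volume 0 x := by
  rw [intervalIntegrable_iff_integrableOn_Ioc_of_le hx]
  refine Integrable.mono' (integrable_const 1) measurable_dl_integrand.aestronglyMeasurable ?_
  refine ae_restrict_of_forall_mem measurableSet_Ioc (fun t ht => ?_)
  rw [Real.norm_eq_abs, abs_of_nonneg (dl_integrand_nonneg ht.1)]
  exact dl_integrand_le_one ht.1

lemma dl_nonneg {x : ℝ} (hx : 0 ≤ x) : 0 ≤ dl x := by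
  refine intervalIntegral.integral_nonneg hx (fun t ht => ?_)
  rcases eq_or_lt_of_le ht.1 with h | h
  · simp [← h]
  · exact dl_integrand_nonneg h

lemma dl_le_self {x : ℝ} (hx : 0 ≤ x) : dl x ≤ x := by
  have := intervalIntegral.integral_mono_on (a := 0) (b := x) hx
    (dl_intervalIntegrable hx) intervalIntegrable_const
    (g := fun _ => (1:ℝ)) (fun t ht => by
      rcases eq_or_lt_of_le ht.1 with h | h
      · simp [← h]
      · exact dl_integrand_le_one h)
  simpa [dl] using this

lemma dl_hasDerivAt {x : ℝ} (hx : 0 < x) :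
    HasDerivAt dl (Real.log (1 + x) / x) x := by
  refine intervalIntegral.integral_hasDerivAt_right (dl_intervalIntegrable hx.le)
    ⟨univ, univ_mem, measurable_dl_integrand.aestronglyMeasurable⟩ ?_
  exact ContinuousAt.div (ContinuousAt.log (by fun_prop) (by linarith)) continuousAt_id hx.ne'

lemma dl_tendsto_zero : Filter.Tendsto dl (nhdsWithin 0 (Ioi 0)) (nhds 0) := by
  refine squeeze_zero' ?_ ?_ (tendsto_id.mono_left nhdsWithin_le_nhds)
  · filter_upwards [self_mem_nhdsWithin] with x hx; exact dl_nonneg (le_of_lt hx)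
  · filter_upwards [self_mem_nhdsWithin] with x hx; exact dl_le_self (le_of_lt hx)

/-- Inversion formula for `dl`. -/
lemma dl_inversion {x : ℝ} (hx : 0 < x) :
    dl x + dl x⁻¹ = (Real.log x)^2/2 + 2 * dl 1 := by
  set g : ℝ → ℝ := fun y => dl y + dl y⁻¹ - (Real.log y)^2/2 with hgdef
  have hg : ∀ y : ℝ, 0 < y → HasDerivAt g 0 y := by
    intro y hy
    have h1 := dl_hasDerivAt hy
    have h2 : HasDerivAt (fun t : ℝ => dl t⁻¹)
        ((Real.log (1 + y⁻¹) / y⁻¹) * (-(y^2)⁻¹)) y :=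
      (dl_hasDerivAt (inv_pos.2 hy)).comp y (hasDerivAt_inv hy.ne')
    have h3 : HasDerivAt (fun t : ℝ => (Real.log t)^2/2) (Real.log y / y) y := by
      have := ((Real.hasDerivAt_log hy.ne').pow 2).div_const 2
      refine this.congr_deriv (Eq.symm ?_)
      field_simp
      ring
    have h4 := (h1.add h2).sub h3
    refine h4.congr_deriv (Eq.symm ?_)
    have hlog : Real.log (1 + y⁻¹) = Real.log (1 + y) - Real.log y := by
      rw [← Real.log_div (by positivity) hy.ne']
      congr 1
      field_simp
      ring
    rw [hlog]
    field_simp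
    ring
  have key : ∀ c d : ℝ, 0 < c → c ≤ d → g d = g c := by
    intro c d hc hcd
    have := constant_of_has_deriv_right_zero (f := g) (a := c) (b := d)
      (fun t ht => ((hg t (lt_of_lt_of_le hc ht.1)).continuousAt).continuousWithinAt)
      (fun t ht => ((hg t (lt_of_lt_of_le hc ht.1)).hasDerivWithinAt))
    exact this d (right_mem_Icc.2 hcd)
  have hgx : g x = g 1 := by
    rcases le_total x 1 with h | h
    · exact (key x 1 hx h).symm
    · exact key 1 x one_pos h
  have : g 1 = 2 * dl 1 := by
    show dl 1 + dl 1⁻¹ - (Real.log 1)^2/2 = 2 * dl 1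
    simp
    ring
  rw [this] at hgx
  simp only [hgdef] at hgx
  linarith

lemma tendsto_exp_neg2_atTop : Tendsto (fun v : ℝ => Real.exp (-(2*v))) atTop (nhds 0) :=
  Real.tendsto_exp_neg_atTop_nhds_zero.comp (tendsto_id.const_mul_atTop two_pos)

lemma tendsto_vexp_atTop : Tendsto (fun v : ℝ => v * Real.exp (-(2*v))) atTop (nhds 0) := by
  have h := (Real.tendsto_pow_mul_exp_neg_atTop_nhds_zero 1).comp
    (tendsto_id.const_mul_atTop two_pos (f := fun v : ℝ => v))
  have h2 := h.const_mul (1/2 : ℝ)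
  rw [mul_zero] at h2
  refine h2.congr (fun v => ?_)
  simp only [Function.comp, pow_one, id]
  ring

lemma tendsto_T1 (a : ℝ) :
    Tendsto (fun v : ℝ => Real.log (1 + a * Real.exp (-(2*v)))) atTop (nhds 0) := by
  have h : Tendsto (fun v : ℝ => 1 + a * Real.exp (-(2*v))) atTop (nhds (1 + a * 0)) :=
    tendsto_const_nhds.add (tendsto_exp_neg2_atTop.const_mul a)
  rw [mul_zero, add_zero] at h
  have := (Real.continuousAt_log (one_ne_zero)).tendsto.comp h
  simpa [Function.comp_def] using this

lemma tendsto_T3 {a : ℝ} (ha : 0 < a) :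
    Tendsto (fun v : ℝ => v * Real.log (1 + a * Real.exp (-(2*v)))) atTop (nhds 0) := by
  have hb : Tendsto (fun v : ℝ => a * (v * Real.exp (-(2*v)))) atTop (nhds 0) := by
    have := tendsto_vexp_atTop.const_mul a
    rwa [mul_zero] at this
  refine squeeze_zero' ?_ ?_ hb
  · filter_upwards [eventually_ge_atTop (0:ℝ)] with v hv
    exact mul_nonneg hv (Real.log_nonneg (by nlinarith [Real.exp_pos (-(2*v))]))
  · filter_upwards [eventually_ge_atTop (0:ℝ)] with v hv
    have h1 : Real.log (1 + a * Real.exp (-(2*v))) ≤ a * Real.exp (-(2*v)) := by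
      have := Real.log_le_sub_one_of_pos (x := 1 + a * Real.exp (-(2*v)))
        (by nlinarith [Real.exp_pos (-(2*v))])
      linarith
    calc v * Real.log (1 + a * Real.exp (-(2*v))) ≤ v * (a * Real.exp (-(2*v))) :=
          mul_le_mul_of_nonneg_left h1 hv
      _ = a * (v * Real.exp (-(2*v))) := by ring

lemma tendsto_T5 {a : ℝ} (ha : 0 < a) :
    Tendsto (fun v : ℝ => dl (a * Real.exp (-(2*v)))) atTop (nhds 0) := by
  have hb : Tendsto (fun v : ℝ => a * Real.exp (-(2*v))) atTop (nhds 0) := by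
    have := tendsto_exp_neg2_atTop.const_mul a
    rwa [mul_zero] at this
  refine squeeze_zero' ?_ ?_ hb
  · exact Eventually.of_forall (fun v => dl_nonneg (by positivity))
  · exact Eventually.of_forall (fun v => dl_le_self (by positivity))
lemma negcomp {f : ℝ → ℝ} {c : ℝ} (h : Tendsto f atTop (nhds c)) :
    Tendsto (fun v : ℝ => f (-v)) atBot (nhds c) :=
  h.comp tendsto_neg_atBot_atTop

lemma exp2_eq (a v : ℝ) (ha : 0 < a) : Real.exp (2*v)/a = (1/a) * Real.exp (-(2*(-v))) := by
  have : -(2 * (-v)) = 2*v := by ring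
  rw [this]
  ring

lemma tendsto_T2 {a : ℝ} (ha : 0 < a) :
    Tendsto (fun v : ℝ => Real.log (1 + Real.exp (2*v)/a)) atBot (nhds 0) := by
  have := negcomp (tendsto_T1 (1/a))
  refine this.congr (fun v => ?_)
  rw [exp2_eq a v ha]

lemma tendsto_T4 {a : ℝ} (ha : 0 < a) :
    Tendsto (fun v : ℝ => v * Real.log (1 + Real.exp (2*v)/a)) atBot (nhds 0) := by
  have := (negcomp (tendsto_T3 (a := 1/a) (by positivity))).neg
  rw [neg_zero] at this
  refine this.congr (fun v => ?_)
  rw [exp2_eq a v ha]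
  ring

lemma tendsto_T6 {a : ℝ} (ha : 0 < a) :
    Tendsto (fun v : ℝ => dl (Real.exp (2*v)/a)) atBot (nhds 0) := by
  have := negcomp (tendsto_T5 (a := 1/a) (by positivity))
  refine this.congr (fun v => ?_)
  rw [exp2_eq a v ha]

lemma one_add_aexp_pos {a : ℝ} (ha : 0 < a) (v : ℝ) : 0 < 1 + a * Real.exp (-(2*v)) := by
  have := Real.exp_pos (-(2*v)); nlinarith

lemma hasDerivAt_inner {a : ℝ} (v : ℝ) :
    HasDerivAt (fun v : ℝ => a * Real.exp (-(2*v))) (a * Real.exp (-(2*v)) * (-2)) v := by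
  have h1 : HasDerivAt (fun v : ℝ => -(2*v)) (-2) v := by
    exact (((hasDerivAt_id v).const_mul (2:ℝ)).neg).congr_deriv (by simp)
  have h2 := h1.exp
  have h3 := h2.const_mul a
  refine h3.congr_deriv (Eq.symm ?_); ring

/-- Antiderivative term for `I1`. -/
lemma hasDerivAt_phi {a : ℝ} (p : ℝ) (ha : 0 < a) (v : ℝ) :
    HasDerivAt (fun v : ℝ => -(p/(2*a)) * Real.log (1 + a * Real.exp (-(2*v))))
      (p / (Real.exp (2*v) + a)) v := by
  have h3 := (hasDerivAt_inner (a := a) v).const_add 1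
  have h4 := h3.log (one_add_aexp_pos ha v).ne'
  have h5 := h4.const_mul (-(p/(2*a)))
  refine h5.congr_deriv (Eq.symm ?_)
  rw [Real.exp_neg]
  have hE := Real.exp_pos (2*v)
  have h1a : (0:ℝ) < 1 + a * (Real.exp (2*v))⁻¹ := by positivity
  field_simp

/-- Antiderivative term for `I2`. -/
lemma hasDerivAt_psi {a : ℝ} (p : ℝ) (ha : 0 < a) (v : ℝ) :
    HasDerivAt (fun v : ℝ => -(p/(2*a)) * (v * Real.log (1 + a * Real.exp (-(2*v))))
        - (p/(4*a)) * dl (a * Real.exp (-(2*v))))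
      (p * v / (Real.exp (2*v) + a)) v := by
  have hpos : 0 < a * Real.exp (-(2*v)) := by positivity
  have h3 := (hasDerivAt_inner (a := a) v).const_add 1
  have hlog := h3.log (one_add_aexp_pos ha v).ne'
  have hprod := (hasDerivAt_id v).mul hlog
  have hdl0 := (dl_hasDerivAt hpos).comp v (hasDerivAt_inner (a := a) v)
  have htot := (hprod.const_mul (-(p/(2*a)))).sub (hdl0.const_mul (p/(4*a)))
  refine htot.congr_deriv (Eq.symm ?_)
  rw [Real.exp_neg]
  have hE := Real.exp_pos (2*v)
  have h1a : (0:ℝ) < 1 + a * (Real.exp (2*v))⁻¹ := by positivity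
  have h1b : (0:ℝ) < a * (Real.exp (2*v))⁻¹ := by positivity
  field_simp
  simp only [id_eq]; ring

lemma logid {a : ℝ} (ha : 0 < a) (v : ℝ) :
    Real.log (1 + a * Real.exp (-(2*v)))
      = Real.log a - 2*v + Real.log (1 + Real.exp (2*v)/a) := by
  have hE := Real.exp_pos (2*v)
  have hEn := Real.exp_ne_zero (2*v)
  have e1 : 1 + a * Real.exp (-(2*v))
      = (a * Real.exp (-(2*v))) * (1 + Real.exp (2*v)/a) := by
    rw [Real.exp_neg]; field_simp; ring
  have h2 : (0:ℝ) < 1 + Real.exp (2*v)/a := by positivity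
  rw [e1, Real.log_mul (by positivity) h2.ne', Real.log_mul ha.ne' (Real.exp_ne_zero _),
    Real.log_exp]
  ring

lemma dl_inv_id {a : ℝ} (ha : 0 < a) (v : ℝ) :
    dl (a * Real.exp (-(2*v)))
      = (Real.log a - 2*v)^2/2 + 2 * dl 1 - dl (Real.exp (2*v)/a) := by
  have hpos : 0 < a * Real.exp (-(2*v)) := by positivity
  have hinv := dl_inversion hpos
  have hxinv : (a * Real.exp (-(2*v)))⁻¹ = Real.exp (2*v)/a := by
    rw [Real.exp_neg]; field_simp
  have hlogx : Real.log (a * Real.exp (-(2*v))) = Real.log a - 2*v := by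
    rw [Real.log_mul ha.ne' (Real.exp_ne_zero _), Real.log_exp]; ring
  rw [hxinv, hlogx] at hinv
  linarith

/-- First main 1D integral evaluation. -/
lemma I1 {a₁ a₂ a₃ : ℝ} (p₁ p₂ p₃ : ℝ) (h₁ : 0 < a₁) (h₂ : 0 < a₂) (h₃ : 0 < a₃)
    (hp : p₁/a₁ + p₂/a₂ + p₃/a₃ = 0)
    (hint : Integrable (fun v : ℝ => p₁/(Real.exp (2*v)+a₁) + p₂/(Real.exp (2*v)+a₂)
      + p₃/(Real.exp (2*v)+a₃))) :
    ∫ v : ℝ, (p₁/(Real.exp (2*v)+a₁) + p₂/(Real.exp (2*v)+a₂) + p₃/(Real.exp (2*v)+a₃))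
      = p₁*Real.log a₁/(2*a₁) + p₂*Real.log a₂/(2*a₂) + p₃*Real.log a₃/(2*a₃) := by
  set Φ : ℝ → ℝ := fun v => -(p₁/(2*a₁)) * Real.log (1 + a₁ * Real.exp (-(2*v)))
    + (-(p₂/(2*a₂)) * Real.log (1 + a₂ * Real.exp (-(2*v))))
    + (-(p₃/(2*a₃)) * Real.log (1 + a₃ * Real.exp (-(2*v)))) with hΦ
  have hderiv : ∀ v : ℝ, HasDerivAt Φ
      (p₁/(Real.exp (2*v)+a₁) + p₂/(Real.exp (2*v)+a₂) + p₃/(Real.exp (2*v)+a₃)) v :=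
    fun v => ((hasDerivAt_phi p₁ h₁ v).add (hasDerivAt_phi p₂ h₂ v)).add (hasDerivAt_phi p₃ h₃ v)
  have htop : Tendsto Φ atTop (nhds 0) := by
    have h0 := (((tendsto_T1 a₁).const_mul (-(p₁/(2*a₁)))).add
      ((tendsto_T1 a₂).const_mul (-(p₂/(2*a₂))))).add
      ((tendsto_T1 a₃).const_mul (-(p₃/(2*a₃))))
    rw [show -(p₁/(2*a₁)) * (0:ℝ) + -(p₂/(2*a₂)) * (0:ℝ) + -(p₃/(2*a₃)) * (0:ℝ) = 0 from by ring]
      at h0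
    exact h0
  have hbotid : ∀ v : ℝ, Φ v = -(p₁*Real.log a₁/(2*a₁) + p₂*Real.log a₂/(2*a₂)
      + p₃*Real.log a₃/(2*a₃))
      + (-(p₁/(2*a₁)) * Real.log (1 + Real.exp (2*v)/a₁)
        + (-(p₂/(2*a₂)) * Real.log (1 + Real.exp (2*v)/a₂))
        + (-(p₃/(2*a₃)) * Real.log (1 + Real.exp (2*v)/a₃))) := by
    intro v
    rw [hΦ]
    simp only
    rw [logid h₁ v, logid h₂ v, logid h₃ v]
    linear_combination v * hp
  have hbot : Tendsto Φ atBot (nhds (-(p₁*Real.log a₁/(2*a₁) + p₂*Real.log a₂/(2*a₂)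
      + p₃*Real.log a₃/(2*a₃)))) := by
    have h0 : Tendsto (fun v : ℝ => -(p₁*Real.log a₁/(2*a₁) + p₂*Real.log a₂/(2*a₂)
        + p₃*Real.log a₃/(2*a₃))
        + (-(p₁/(2*a₁)) * Real.log (1 + Real.exp (2*v)/a₁)
        + (-(p₂/(2*a₂)) * Real.log (1 + Real.exp (2*v)/a₂))
        + (-(p₃/(2*a₃)) * Real.log (1 + Real.exp (2*v)/a₃)))) atBot
        (nhds (-(p₁*Real.log a₁/(2*a₁) + p₂*Real.log a₂/(2*a₂) + p₃*Real.log a₃/(2*a₃)))) := by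
      have := tendsto_const_nhds (α := ℝ) (f := atBot (α := ℝ))
        (x := -(p₁*Real.log a₁/(2*a₁) + p₂*Real.log a₂/(2*a₂) + p₃*Real.log a₃/(2*a₃)))
      have h2 := (((tendsto_T2 h₁).const_mul (-(p₁/(2*a₁)))).add
        ((tendsto_T2 h₂).const_mul (-(p₂/(2*a₂))))).add
        ((tendsto_T2 h₃).const_mul (-(p₃/(2*a₃))))
      have h3 := this.add h2
      simpa using h3
    exact h0.congr (fun v => (hbotid v).symm)
  have := integral_of_hasDerivAt_of_tendsto hderiv hint hbot htop
  rw [this]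
  ring

/-- Second main 1D integral evaluation. -/
lemma I2 {a₁ a₂ a₃ : ℝ} (p₁ p₂ p₃ : ℝ) (h₁ : 0 < a₁) (h₂ : 0 < a₂) (h₃ : 0 < a₃)
    (hp : p₁/a₁ + p₂/a₂ + p₃/a₃ = 0)
    (hint : Integrable (fun v : ℝ => p₁*v/(Real.exp (2*v)+a₁) + p₂*v/(Real.exp (2*v)+a₂)
      + p₃*v/(Real.exp (2*v)+a₃))) :
    ∫ v : ℝ, (p₁*v/(Real.exp (2*v)+a₁) + p₂*v/(Real.exp (2*v)+a₂) + p₃*v/(Real.exp (2*v)+a₃))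
      = p₁*(Real.log a₁)^2/(8*a₁) + p₂*(Real.log a₂)^2/(8*a₂) + p₃*(Real.log a₃)^2/(8*a₃) := by
  set Ψ : ℝ → ℝ := fun v =>
    (-(p₁/(2*a₁)) * (v * Real.log (1 + a₁ * Real.exp (-(2*v)))) - (p₁/(4*a₁)) * dl (a₁ * Real.exp (-(2*v))))
    + (-(p₂/(2*a₂)) * (v * Real.log (1 + a₂ * Real.exp (-(2*v)))) - (p₂/(4*a₂)) * dl (a₂ * Real.exp (-(2*v))))
    + (-(p₃/(2*a₃)) * (v * Real.log (1 + a₃ * Real.exp (-(2*v)))) - (p₃/(4*a₃)) * dl (a₃ * Real.exp (-(2*v)))) with hΨ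
  have hderiv : ∀ v : ℝ, HasDerivAt Ψ
      (p₁*v/(Real.exp (2*v)+a₁) + p₂*v/(Real.exp (2*v)+a₂) + p₃*v/(Real.exp (2*v)+a₃)) v := by
    intro v
    have h := ((hasDerivAt_psi p₁ h₁ v).add (hasDerivAt_psi p₂ h₂ v)).add (hasDerivAt_psi p₃ h₃ v)
    refine h.congr_deriv (Eq.symm ?_) <;> ring_nf
  have htop : Tendsto Ψ atTop (nhds 0) := by
    have h0 := ((((tendsto_T3 h₁).const_mul (-(p₁/(2*a₁)))).sub
        ((tendsto_T5 h₁).const_mul (p₁/(4*a₁)))).add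
      (((tendsto_T3 h₂).const_mul (-(p₂/(2*a₂)))).sub
        ((tendsto_T5 h₂).const_mul (p₂/(4*a₂))))).add
      (((tendsto_T3 h₃).const_mul (-(p₃/(2*a₃)))).sub
        ((tendsto_T5 h₃).const_mul (p₃/(4*a₃))))
    rw [show -(p₁/(2*a₁)) * (0:ℝ) - p₁/(4*a₁) * (0:ℝ) + (-(p₂/(2*a₂)) * (0:ℝ) - p₂/(4*a₂) * (0:ℝ))
      + (-(p₃/(2*a₃)) * (0:ℝ) - p₃/(4*a₃) * (0:ℝ)) = 0 from by ring] at h0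
    exact h0
  set C2 : ℝ := -(p₁*(Real.log a₁)^2/(8*a₁) + p₂*(Real.log a₂)^2/(8*a₂)
      + p₃*(Real.log a₃)^2/(8*a₃)) with hC2
  have hbotid : ∀ v : ℝ, Ψ v = C2
      + ((-(p₁/(2*a₁)) * (v * Real.log (1 + Real.exp (2*v)/a₁)) + (p₁/(4*a₁)) * dl (Real.exp (2*v)/a₁))
      + (-(p₂/(2*a₂)) * (v * Real.log (1 + Real.exp (2*v)/a₂)) + (p₂/(4*a₂)) * dl (Real.exp (2*v)/a₂))
      + (-(p₃/(2*a₃)) * (v * Real.log (1 + Real.exp (2*v)/a₃)) + (p₃/(4*a₃)) * dl (Real.exp (2*v)/a₃))) := by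
    intro v
    rw [hΨ, hC2]
    simp only
    rw [logid h₁ v, logid h₂ v, logid h₃ v, dl_inv_id h₁ v, dl_inv_id h₂ v, dl_inv_id h₃ v]
    linear_combination ((v^2 - dl 1)/2) * hp
  have hbot : Tendsto Ψ atBot (nhds C2) := by
    have h2 := ((((tendsto_T4 h₁).const_mul (-(p₁/(2*a₁)))).add
        ((tendsto_T6 h₁).const_mul (p₁/(4*a₁)))).add
      (((tendsto_T4 h₂).const_mul (-(p₂/(2*a₂)))).add
        ((tendsto_T6 h₂).const_mul (p₂/(4*a₂))))).add
      (((tendsto_T4 h₃).const_mul (-(p₃/(2*a₃)))).add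
        ((tendsto_T6 h₃).const_mul (p₃/(4*a₃))))
    have h3 := (tendsto_const_nhds (α := ℝ) (f := atBot (α := ℝ)) (x := C2)).add h2
    rw [show C2 + (-(p₁/(2*a₁)) * (0:ℝ) + p₁/(4*a₁) * (0:ℝ)
      + (-(p₂/(2*a₂)) * (0:ℝ) + p₂/(4*a₂) * (0:ℝ))
      + (-(p₃/(2*a₃)) * (0:ℝ) + p₃/(4*a₃) * (0:ℝ))) = C2 from by ring] at h3
    exact h3.congr (fun v => (hbotid v).symm)
  have := integral_of_hasDerivAt_of_tendsto hderiv hint hbot htop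
  rw [this, hC2]
  ring

noncomputable def Dcosh (w₁ w₂ w₃ v : ℝ) : ℝ :=
  Real.cosh (w₁-v) * Real.cosh (w₂-v) * Real.cosh (w₃-v)

lemma Dcosh_pos (w₁ w₂ w₃ v : ℝ) : 0 < Dcosh w₁ w₂ w₃ v := by
  unfold Dcosh; positivity

lemma cosh_lower (x : ℝ) : Real.exp |x| / 2 ≤ Real.cosh x := by
  rw [Real.cosh_eq]
  rcases abs_cases x with ⟨h, _⟩ | ⟨h, _⟩ <;> rw [h] <;>
    [skip; rw [Real.exp_neg, ← Real.exp_neg]] <;> nlinarith [Real.exp_pos x, Real.exp_pos (-x)]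

lemma cosh_lower' (w v : ℝ) : Real.exp (|v| - |w|) / 2 ≤ Real.cosh (w - v) := by
  refine le_trans ?_ (cosh_lower (w - v))
  have : |v| - |w| ≤ |w - v| := by
    have := abs_sub_abs_le_abs_sub v w
    rw [abs_sub_comm] at this
    linarith
  have := Real.exp_le_exp.mpr this
  linarith

lemma Dcosh_lower (w₁ w₂ w₃ v : ℝ) :
    Real.exp (3*|v| - (|w₁|+|w₂|+|w₃|)) / 8 ≤ Dcosh w₁ w₂ w₃ v := by
  have h1 := cosh_lower' w₁ v
  have h2 := cosh_lower' w₂ v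
  have h3 := cosh_lower' w₃ v
  have e1 : Real.exp (3*|v| - (|w₁|+|w₂|+|w₃|)) / 8
      = (Real.exp (|v| - |w₁|)/2) * (Real.exp (|v| - |w₂|)/2) * (Real.exp (|v| - |w₃|)/2) := by
    rw [show 3*|v| - (|w₁|+|w₂|+|w₃|) = (|v| - |w₁|) + ((|v| - |w₂|) + (|v| - |w₃|)) by ring,
      Real.exp_add, Real.exp_add]
    ring
  rw [e1]
  unfold Dcosh
  have p1 := (Real.exp_pos (|v| - |w₁|))
  have p2 := (Real.exp_pos (|v| - |w₂|))
  have p3 := (Real.exp_pos (|v| - |w₃|))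
  have c1 := Real.cosh_pos (x := w₁ - v)
  have c2 := Real.cosh_pos (x := w₂ - v)
  exact mul_le_mul (mul_le_mul h1 h2 (by positivity) c1.le) h3 (by positivity) (by positivity)

lemma expDcosh_bound (w₁ w₂ w₃ : ℝ) {c : ℝ} (hc : |c| ≤ 1) (v : ℝ) :
    Real.exp (c*v) / Dcosh w₁ w₂ w₃ v
      ≤ 8 * Real.exp (|w₁|+|w₂|+|w₃|) * Real.exp (-(2*|v|)) := by
  have hD := Dcosh_pos w₁ w₂ w₃ v
  have hlow := Dcosh_lower w₁ w₂ w₃ v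
  have hinv : (Dcosh w₁ w₂ w₃ v)⁻¹ ≤ 8 * Real.exp (-(3*|v|) + (|w₁|+|w₂|+|w₃|)) := by
    have h8 : (0:ℝ) < Real.exp (3*|v| - (|w₁|+|w₂|+|w₃|)) / 8 := by positivity
    have hi := inv_anti₀ h8 hlow
    calc (Dcosh w₁ w₂ w₃ v)⁻¹ ≤ (Real.exp (3*|v| - (|w₁|+|w₂|+|w₃|)) / 8)⁻¹ := hi
      _ = 8 * Real.exp (-(3*|v|) + (|w₁|+|w₂|+|w₃|)) := by
          rw [show (-(3*|v|) + (|w₁|+|w₂|+|w₃|)) = -(3*|v| - (|w₁|+|w₂|+|w₃|)) by ring,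
            Real.exp_neg]
          field_simp
  have hnum : Real.exp (c*v) ≤ Real.exp |v| := by
    apply Real.exp_le_exp.mpr
    calc c*v ≤ |c * v| := le_abs_self _
      _ = |c| * |v| := abs_mul c v
      _ ≤ 1 * |v| := mul_le_mul_of_nonneg_right hc (abs_nonneg v)
      _ = |v| := one_mul _
  calc Real.exp (c*v) / Dcosh w₁ w₂ w₃ v
      = Real.exp (c*v) * (Dcosh w₁ w₂ w₃ v)⁻¹ := div_eq_mul_inv _ _
    _ ≤ Real.exp (c*v) * (8 * Real.exp (-(3*|v|) + (|w₁|+|w₂|+|w₃|))) :=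
        mul_le_mul_of_nonneg_left hinv (Real.exp_pos _).le
    _ = 8 * Real.exp (c*v + (-(3*|v|) + (|w₁|+|w₂|+|w₃|))) := by rw [Real.exp_add (c*v)]; ring
    _ ≤ 8 * Real.exp ((|w₁|+|w₂|+|w₃|) + -(2*|v|)) := by
        have hcv : c*v ≤ |v| := by
          calc c*v ≤ |c * v| := le_abs_self _
            _ = |c| * |v| := abs_mul c v
            _ ≤ 1 * |v| := mul_le_mul_of_nonneg_right hc (abs_nonneg v)
            _ = |v| := one_mul _
        have harg : c*v + (-(3*|v|) + (|w₁|+|w₂|+|w₃|)) ≤ (|w₁|+|w₂|+|w₃|) + -(2*|v|) := by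
          linarith
        have := Real.exp_le_exp.mpr harg
        linarith
    _ = 8 * Real.exp (|w₁|+|w₂|+|w₃|) * Real.exp (-(2*|v|)) := by rw [Real.exp_add]; ring

lemma continuous_expDcosh (w₁ w₂ w₃ c : ℝ) :
    Continuous (fun v => Real.exp (c*v) / Dcosh w₁ w₂ w₃ v) := by
  apply Continuous.div
  · fun_prop
  · unfold Dcosh; fun_prop
  · exact fun v => (Dcosh_pos w₁ w₂ w₃ v).ne'

lemma integrable_E (w₁ w₂ w₃ : ℝ) {c : ℝ} (hc : |c| ≤ 1) :
    Integrable (fun v => Real.exp (c*v) / Dcosh w₁ w₂ w₃ v) := by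
  refine Integrable.mono' (((integrable_exp_neg_abs two_pos).const_mul
    (8 * Real.exp (|w₁|+|w₂|+|w₃|)))) (continuous_expDcosh w₁ w₂ w₃ c).aestronglyMeasurable
    (Eventually.of_forall (fun v => ?_))
  rw [Real.norm_eq_abs, abs_of_pos (div_pos (Real.exp_pos _) (Dcosh_pos w₁ w₂ w₃ v))]
  exact expDcosh_bound w₁ w₂ w₃ hc v

lemma integrable_D (w₁ w₂ w₃ : ℝ) {c : ℝ} (hc : |c| ≤ 1) :
    Integrable (fun v => v * Real.exp (c*v) / Dcosh w₁ w₂ w₃ v) := by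
  have hcont : Continuous (fun v => v * Real.exp (c*v) / Dcosh w₁ w₂ w₃ v) := by
    apply Continuous.div
    · fun_prop
    · unfold Dcosh; fun_prop
    · exact fun v => (Dcosh_pos w₁ w₂ w₃ v).ne'
  refine Integrable.mono' (((integrable_exp_neg_abs one_pos).const_mul
    (8 * Real.exp (|w₁|+|w₂|+|w₃|)))) hcont.aestronglyMeasurable
    (Eventually.of_forall (fun v => ?_))
  have hD := Dcosh_pos w₁ w₂ w₃ v
  rw [Real.norm_eq_abs]
  have h1 : |v * Real.exp (c*v) / Dcosh w₁ w₂ w₃ v|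
      = |v| * (Real.exp (c*v) / Dcosh w₁ w₂ w₃ v) := by
    rw [abs_div, abs_mul, abs_of_pos hD, abs_of_pos (Real.exp_pos _), mul_div_assoc]
  rw [h1]
  have h2 := expDcosh_bound w₁ w₂ w₃ hc v
  have h3 : |v| * (Real.exp (c*v) / Dcosh w₁ w₂ w₃ v)
      ≤ |v| * (8 * Real.exp (|w₁|+|w₂|+|w₃|) * Real.exp (-(2*|v|))) :=
    mul_le_mul_of_nonneg_left h2 (abs_nonneg v)
  refine h3.trans ?_
  have h4 : |v| ≤ Real.exp |v| := (Real.add_one_le_exp |v|).trans' (by linarith [abs_nonneg v])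
  calc |v| * (8 * Real.exp (|w₁|+|w₂|+|w₃|) * Real.exp (-(2*|v|)))
      ≤ Real.exp |v| * (8 * Real.exp (|w₁|+|w₂|+|w₃|) * Real.exp (-(2*|v|))) := by
        apply mul_le_mul_of_nonneg_right h4 (by positivity)
    _ = 8 * Real.exp (|w₁|+|w₂|+|w₃|) * (Real.exp |v| * Real.exp (-(2*|v|))) := by ring
    _ = 8 * Real.exp (|w₁|+|w₂|+|w₃|) * Real.exp (|v| + -(2*|v|)) := by rw [← Real.exp_add]
    _ = 8 * Real.exp (|w₁|+|w₂|+|w₃|) * Real.exp (-(1*|v|)) := by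
        rw [show |v| + -(2*|v|) = -(1*|v|) by ring]

lemma cosh_form (w v : ℝ) :
    Real.cosh (w - v) = ((Real.exp w)^2 + (Real.exp v)^2) / (2 * (Real.exp v * Real.exp w)) := by
  rw [Real.cosh_eq, Real.exp_sub, show -(w - v) = v - w by ring, Real.exp_sub]
  have h1 := Real.exp_ne_zero w
  have h2 := Real.exp_ne_zero v
  field_simp

/-- coefficient c(x;y,z) = x²/((y-x)(z-x)) -/
noncomputable def cC (x y z : ℝ) : ℝ := x^2/((y - x)*(z - x))
/-- coefficient d(x;y,z) = -x/((y-x)(z-x)) -/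
noncomputable def dC (x y z : ℝ) : ℝ := -x/((y - x)*(z - x))

noncomputable def qc (w₁ w₂ w₃ : ℝ) : ℝ :=
  8 * (Real.exp w₁ * Real.exp w₂ * Real.exp w₃) * cC (Real.exp w₁^2) (Real.exp w₂^2) (Real.exp w₃^2)
noncomputable def qd (w₁ w₂ w₃ : ℝ) : ℝ :=
  8 * (Real.exp w₁ * Real.exp w₂ * Real.exp w₃) * dC (Real.exp w₁^2) (Real.exp w₂^2) (Real.exp w₃^2)

section
variable (w₁ w₂ w₃ : ℝ)

lemma exp_sq_ne {x y : ℝ} (h : x ≠ y) : Real.exp x ^ 2 ≠ Real.exp y ^ 2 := by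
  intro hsq
  have hxy : Real.exp x = Real.exp y := by
    nlinarith [Real.exp_pos x, Real.exp_pos y, sq_nonneg (Real.exp x - Real.exp y),
      sq_nonneg (Real.exp x + Real.exp y)]
  exact h (Real.exp_injective hxy)

/-- partial fraction identity for e^{cv}/∏cosh, c = ±1 -/
lemma pf_id (h12 : w₁ ≠ w₂) (h13 : w₁ ≠ w₃) (h23 : w₂ ≠ w₃) (c : ℝ) (hc : c = 1 ∨ c = -1) (v : ℝ) :
    Real.exp (c*v) / Dcosh w₁ w₂ w₃ v =
      (if c = 1 then qc w₁ w₂ w₃ else qd w₁ w₂ w₃) / (Real.exp (2*v) + Real.exp w₁ ^ 2)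
      + (if c = 1 then qc w₂ w₁ w₃ else qd w₂ w₁ w₃) / (Real.exp (2*v) + Real.exp w₂ ^ 2)
      + (if c = 1 then qc w₃ w₁ w₂ else qd w₃ w₁ w₂) / (Real.exp (2*v) + Real.exp w₃ ^ 2) := by
  have hE2 : Real.exp (2*v) = (Real.exp v)^2 := by rw [two_mul, Real.exp_add]; ring
  have e1 := Real.exp_ne_zero w₁
  have e2 := Real.exp_ne_zero w₂
  have e3 := Real.exp_ne_zero w₃
  have ev := Real.exp_ne_zero v
  have d12 : Real.exp w₂ ^ 2 - Real.exp w₁ ^ 2 ≠ 0 := sub_ne_zero.mpr (exp_sq_ne (Ne.symm h12))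
  have d13 : Real.exp w₃ ^ 2 - Real.exp w₁ ^ 2 ≠ 0 := sub_ne_zero.mpr (exp_sq_ne (Ne.symm h13))
  have d21 : Real.exp w₁ ^ 2 - Real.exp w₂ ^ 2 ≠ 0 := sub_ne_zero.mpr (exp_sq_ne h12)
  have d23 : Real.exp w₃ ^ 2 - Real.exp w₂ ^ 2 ≠ 0 := sub_ne_zero.mpr (exp_sq_ne (Ne.symm h23))
  have d31 : Real.exp w₁ ^ 2 - Real.exp w₃ ^ 2 ≠ 0 := sub_ne_zero.mpr (exp_sq_ne h13)
  have d32 : Real.exp w₂ ^ 2 - Real.exp w₃ ^ 2 ≠ 0 := sub_ne_zero.mpr (exp_sq_ne h23)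
  have p1 : Real.exp w₁ ^ 2 + Real.exp v ^ 2 ≠ 0 := by positivity
  have p2 : Real.exp w₂ ^ 2 + Real.exp v ^ 2 ≠ 0 := by positivity
  have p3 : Real.exp w₃ ^ 2 + Real.exp v ^ 2 ≠ 0 := by positivity
  have q1 : Real.exp v ^ 2 + Real.exp w₁ ^ 2 ≠ 0 := by positivity
  have q2 : Real.exp v ^ 2 + Real.exp w₂ ^ 2 ≠ 0 := by positivity
  have q3 : Real.exp v ^ 2 + Real.exp w₃ ^ 2 ≠ 0 := by positivity
  rcases hc with rfl | rfl
  · simp only [↓reduceIte]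
    unfold Dcosh qc cC
    rw [cosh_form w₁ v, cosh_form w₂ v, cosh_form w₃ v, hE2, one_mul]
    field_simp
    ring
  · norm_num
    unfold Dcosh qd dC
    rw [cosh_form w₁ v, cosh_form w₂ v, cosh_form w₃ v, hE2, Real.exp_neg]
    field_simp
    ring

/-- the four 1D integral values -/
lemma E_val (h12 : w₁ ≠ w₂) (h13 : w₁ ≠ w₃) (h23 : w₂ ≠ w₃) (c : ℝ) (hc : c = 1 ∨ c = -1) :
    ∫ v : ℝ, Real.exp (c*v) / Dcosh w₁ w₂ w₃ v
      = (if c = 1 then qc w₁ w₂ w₃ else qd w₁ w₂ w₃)*(2*w₁)/(2*Real.exp w₁^2)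
      + (if c = 1 then qc w₂ w₁ w₃ else qd w₂ w₁ w₃)*(2*w₂)/(2*Real.exp w₂^2)
      + (if c = 1 then qc w₃ w₁ w₂ else qd w₃ w₁ w₂)*(2*w₃)/(2*Real.exp w₃^2) := by
  have hceq : |c| ≤ 1 := by rcases hc with rfl | rfl <;> norm_num
  have hpf := pf_id w₁ w₂ w₃ h12 h13 h23 c hc
  have hint0 := integrable_E w₁ w₂ w₃ hceq
  have hint := hint0.congr (Eventually.of_forall hpf)
  have d12 := sub_ne_zero.mpr (exp_sq_ne h12)
  have d13 := sub_ne_zero.mpr (exp_sq_ne h13)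
  have d23 := sub_ne_zero.mpr (exp_sq_ne h23)
  have d21 := sub_ne_zero.mpr (exp_sq_ne (Ne.symm h12))
  have d31 := sub_ne_zero.mpr (exp_sq_ne (Ne.symm h13))
  have d32 := sub_ne_zero.mpr (exp_sq_ne (Ne.symm h23))
  have e1 := Real.exp_ne_zero w₁
  have e2 := Real.exp_ne_zero w₂
  have e3 := Real.exp_ne_zero w₃
  have hp : (if c = 1 then qc w₁ w₂ w₃ else qd w₁ w₂ w₃)/(Real.exp w₁^2)
      + (if c = 1 then qc w₂ w₁ w₃ else qd w₂ w₁ w₃)/(Real.exp w₂^2)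
      + (if c = 1 then qc w₃ w₁ w₂ else qd w₃ w₁ w₂)/(Real.exp w₃^2) = 0 := by
    rcases hc with rfl | rfl
    · simp only [↓reduceIte]; unfold qc cC; field_simp; ring
    · norm_num; unfold qd dC; field_simp; ring
  rw [integral_congr_ae (Eventually.of_forall hpf)]
  rw [I1 _ _ _ (by positivity) (by positivity) (by positivity) hp hint]
  rw [Real.log_pow, Real.log_pow, Real.log_pow, Real.log_exp, Real.log_exp, Real.log_exp]
  push_cast
  ring

lemma D_val (h12 : w₁ ≠ w₂) (h13 : w₁ ≠ w₃) (h23 : w₂ ≠ w₃) (c : ℝ) (hc : c = 1 ∨ c = -1) :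
    ∫ v : ℝ, v * Real.exp (c*v) / Dcosh w₁ w₂ w₃ v
      = (if c = 1 then qc w₁ w₂ w₃ else qd w₁ w₂ w₃)*(2*w₁)^2/(8*Real.exp w₁^2)
      + (if c = 1 then qc w₂ w₁ w₃ else qd w₂ w₁ w₃)*(2*w₂)^2/(8*Real.exp w₂^2)
      + (if c = 1 then qc w₃ w₁ w₂ else qd w₃ w₁ w₂)*(2*w₃)^2/(8*Real.exp w₃^2) := by
  have hceq : |c| ≤ 1 := by rcases hc with rfl | rfl <;> norm_num
  have hpf := pf_id w₁ w₂ w₃ h12 h13 h23 c hc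
  have hpf2 : ∀ v : ℝ, v * Real.exp (c*v) / Dcosh w₁ w₂ w₃ v =
      (if c = 1 then qc w₁ w₂ w₃ else qd w₁ w₂ w₃)*v / (Real.exp (2*v) + Real.exp w₁ ^ 2)
      + (if c = 1 then qc w₂ w₁ w₃ else qd w₂ w₁ w₃)*v / (Real.exp (2*v) + Real.exp w₂ ^ 2)
      + (if c = 1 then qc w₃ w₁ w₂ else qd w₃ w₁ w₂)*v / (Real.exp (2*v) + Real.exp w₃ ^ 2) := by
    intro v
    have h0 : v * Real.exp (c*v) / Dcosh w₁ w₂ w₃ v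
        = v * (Real.exp (c*v) / Dcosh w₁ w₂ w₃ v) := by ring
    rw [h0, hpf v]
    ring
  have hint0 := integrable_D w₁ w₂ w₃ hceq
  have hint := hint0.congr (Eventually.of_forall hpf2)
  have d12 := sub_ne_zero.mpr (exp_sq_ne h12)
  have d13 := sub_ne_zero.mpr (exp_sq_ne h13)
  have d23 := sub_ne_zero.mpr (exp_sq_ne h23)
  have d21 := sub_ne_zero.mpr (exp_sq_ne (Ne.symm h12))
  have d31 := sub_ne_zero.mpr (exp_sq_ne (Ne.symm h13))
  have d32 := sub_ne_zero.mpr (exp_sq_ne (Ne.symm h23))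
  have e1 := Real.exp_ne_zero w₁
  have e2 := Real.exp_ne_zero w₂
  have e3 := Real.exp_ne_zero w₃
  have hp : (if c = 1 then qc w₁ w₂ w₃ else qd w₁ w₂ w₃)/(Real.exp w₁^2)
      + (if c = 1 then qc w₂ w₁ w₃ else qd w₂ w₁ w₃)/(Real.exp w₂^2)
      + (if c = 1 then qc w₃ w₁ w₂ else qd w₃ w₁ w₂)/(Real.exp w₃^2) = 0 := by
    rcases hc with rfl | rfl
    · simp only [↓reduceIte]; unfold qc cC; field_simp; ring
    · norm_num; unfold qd dC; field_simp; ring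
  rw [integral_congr_ae (Eventually.of_forall hpf2)]
  rw [I2 _ _ _ (by positivity) (by positivity) (by positivity) hp hint]
  rw [Real.log_pow, Real.log_pow, Real.log_pow, Real.log_exp, Real.log_exp, Real.log_exp]
  push_cast
  ring

end

lemma sinh_form (x y : ℝ) :
    Real.sinh (x - y) = ((Real.exp x)^2 - (Real.exp y)^2) / (2 * (Real.exp x * Real.exp y)) := by
  rw [Real.sinh_eq, Real.exp_sub, show -(x - y) = y - x by ring, Real.exp_sub]
  have h1 := Real.exp_ne_zero x
  have h2 := Real.exp_ne_zero y
  field_simp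

lemma fubini_split (w₁ w₂ w₃ : ℝ) :
    (∫ v : ℝ × ℝ, (v.1 - v.2) * Real.sinh (v.1 - v.2) /
        ((Real.cosh (w₁ - v.1) * Real.cosh (w₁ - v.2)) *
         (Real.cosh (w₂ - v.1) * Real.cosh (w₂ - v.2)) *
         (Real.cosh (w₃ - v.1) * Real.cosh (w₃ - v.2))))
      = (∫ v : ℝ, v * Real.exp ((1:ℝ)*v) / Dcosh w₁ w₂ w₃ v)
          * (∫ v : ℝ, Real.exp ((-1:ℝ)*v) / Dcosh w₁ w₂ w₃ v)
        - (∫ v : ℝ, v * Real.exp ((-1:ℝ)*v) / Dcosh w₁ w₂ w₃ v)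
          * (∫ v : ℝ, Real.exp ((1:ℝ)*v) / Dcosh w₁ w₂ w₃ v) := by
  have key : ∀ z : ℝ × ℝ, (z.1 - z.2) * Real.sinh (z.1 - z.2) /
        ((Real.cosh (w₁ - z.1) * Real.cosh (w₁ - z.2)) *
         (Real.cosh (w₂ - z.1) * Real.cosh (w₂ - z.2)) *
         (Real.cosh (w₃ - z.1) * Real.cosh (w₃ - z.2)))
      = (1/2) * ((z.1 * Real.exp ((1:ℝ)*z.1) / Dcosh w₁ w₂ w₃ z.1)
          * (Real.exp ((-1:ℝ)*z.2) / Dcosh w₁ w₂ w₃ z.2))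
        - (1/2) * ((Real.exp ((1:ℝ)*z.1) / Dcosh w₁ w₂ w₃ z.1)
          * (z.2 * Real.exp ((-1:ℝ)*z.2) / Dcosh w₁ w₂ w₃ z.2))
        - (1/2) * ((z.1 * Real.exp ((-1:ℝ)*z.1) / Dcosh w₁ w₂ w₃ z.1)
          * (Real.exp ((1:ℝ)*z.2) / Dcosh w₁ w₂ w₃ z.2))
        + (1/2) * ((Real.exp ((-1:ℝ)*z.1) / Dcosh w₁ w₂ w₃ z.1)
          * (z.2 * Real.exp ((1:ℝ)*z.2) / Dcosh w₁ w₂ w₃ z.2)) := by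
    intro z
    have c11 := (Real.cosh_pos (x := w₁ - z.1)).ne'
    have c12 := (Real.cosh_pos (x := w₁ - z.2)).ne'
    have c21 := (Real.cosh_pos (x := w₂ - z.1)).ne'
    have c22 := (Real.cosh_pos (x := w₂ - z.2)).ne'
    have c31 := (Real.cosh_pos (x := w₃ - z.1)).ne'
    have c32 := (Real.cosh_pos (x := w₃ - z.2)).ne'
    have e1 := Real.exp_ne_zero z.1
    have e2 := Real.exp_ne_zero z.2
    unfold Dcosh
    rw [Real.sinh_eq, Real.exp_sub, show -(z.1 - z.2) = z.2 - z.1 by ring, Real.exp_sub,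
      one_mul, one_mul, neg_one_mul, neg_one_mul, Real.exp_neg, Real.exp_neg]
    field_simp
    ring
  rw [integral_congr_ae (Eventually.of_forall key)]
  have iD1 := integrable_D w₁ w₂ w₃ (c := 1) (by norm_num)
  have iDm := integrable_D w₁ w₂ w₃ (c := -1) (by norm_num)
  have iE1 := integrable_E w₁ w₂ w₃ (c := 1) (by norm_num)
  have iEm := integrable_E w₁ w₂ w₃ (c := -1) (by norm_num)
  rw [Measure.volume_eq_prod]
  have hA : Integrable (fun z : ℝ × ℝ => (1/2) * ((z.1 * Real.exp ((1:ℝ)*z.1) / Dcosh w₁ w₂ w₃ z.1)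
      * (Real.exp ((-1:ℝ)*z.2) / Dcosh w₁ w₂ w₃ z.2))) (volume.prod volume) :=
    (iD1.mul_prod iEm).const_mul _
  have hB : Integrable (fun z : ℝ × ℝ => (1/2) * ((Real.exp ((1:ℝ)*z.1) / Dcosh w₁ w₂ w₃ z.1)
      * (z.2 * Real.exp ((-1:ℝ)*z.2) / Dcosh w₁ w₂ w₃ z.2))) (volume.prod volume) :=
    (iE1.mul_prod iDm).const_mul _
  have hC : Integrable (fun z : ℝ × ℝ => (1/2) * ((z.1 * Real.exp ((-1:ℝ)*z.1) / Dcosh w₁ w₂ w₃ z.1)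
      * (Real.exp ((1:ℝ)*z.2) / Dcosh w₁ w₂ w₃ z.2))) (volume.prod volume) :=
    (iDm.mul_prod iE1).const_mul _
  have hD : Integrable (fun z : ℝ × ℝ => (1/2) * ((Real.exp ((-1:ℝ)*z.1) / Dcosh w₁ w₂ w₃ z.1)
      * (z.2 * Real.exp ((1:ℝ)*z.2) / Dcosh w₁ w₂ w₃ z.2))) (volume.prod volume) :=
    (iEm.mul_prod iD1).const_mul _
  have hAB : Integrable (fun z : ℝ × ℝ => (1/2) * ((z.1 * Real.exp ((1:ℝ)*z.1) / Dcosh w₁ w₂ w₃ z.1)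
      * (Real.exp ((-1:ℝ)*z.2) / Dcosh w₁ w₂ w₃ z.2))
      - (1/2) * ((Real.exp ((1:ℝ)*z.1) / Dcosh w₁ w₂ w₃ z.1)
      * (z.2 * Real.exp ((-1:ℝ)*z.2) / Dcosh w₁ w₂ w₃ z.2))) (volume.prod volume) := hA.sub hB
  have hABC : Integrable (fun z : ℝ × ℝ => (1/2) * ((z.1 * Real.exp ((1:ℝ)*z.1) / Dcosh w₁ w₂ w₃ z.1)
      * (Real.exp ((-1:ℝ)*z.2) / Dcosh w₁ w₂ w₃ z.2))
      - (1/2) * ((Real.exp ((1:ℝ)*z.1) / Dcosh w₁ w₂ w₃ z.1)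
      * (z.2 * Real.exp ((-1:ℝ)*z.2) / Dcosh w₁ w₂ w₃ z.2))
      - (1/2) * ((z.1 * Real.exp ((-1:ℝ)*z.1) / Dcosh w₁ w₂ w₃ z.1)
      * (Real.exp ((1:ℝ)*z.2) / Dcosh w₁ w₂ w₃ z.2))) (volume.prod volume) := hAB.sub hC
  rw [integral_add hABC hD, integral_sub hAB hC, integral_sub hA hB,
    integral_const_mul, integral_const_mul, integral_const_mul, integral_const_mul,
    integral_prod_mul (fun v : ℝ => v * Real.exp ((1:ℝ)*v) / Dcosh w₁ w₂ w₃ v) (fun v : ℝ => Real.exp ((-1:ℝ)*v) / Dcosh w₁ w₂ w₃ v), integral_prod_mul (fun v : ℝ => Real.exp ((1:ℝ)*v) / Dcosh w₁ w₂ w₃ v) (fun v : ℝ => v * Real.exp ((-1:ℝ)*v) / Dcosh w₁ w₂ w₃ v),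
    integral_prod_mul (fun v : ℝ => v * Real.exp ((-1:ℝ)*v) / Dcosh w₁ w₂ w₃ v) (fun v : ℝ => Real.exp ((1:ℝ)*v) / Dcosh w₁ w₂ w₃ v), integral_prod_mul (fun v : ℝ => Real.exp ((-1:ℝ)*v) / Dcosh w₁ w₂ w₃ v) (fun v : ℝ => v * Real.exp ((1:ℝ)*v) / Dcosh w₁ w₂ w₃ v)]
  ring

theorem B2_distinct (w₁ w₂ w₃ : ℝ) (h12 : w₁ ≠ w₂) (h13 : w₁ ≠ w₃) (h23 : w₂ ≠ w₃) :
    ∫ v : ℝ × ℝ, (v.1 - v.2) * Real.sinh (v.1 - v.2) /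
        ((Real.cosh (w₁ - v.1) * Real.cosh (w₁ - v.2)) *
         (Real.cosh (w₂ - v.1) * Real.cosh (w₂ - v.2)) *
         (Real.cosh (w₃ - v.1) * Real.cosh (w₃ - v.2)))
      = 4 * (shr (w₁ - w₂) * shr (w₁ - w₃) * shr (w₂ - w₃)) := by
  rw [fubini_split w₁ w₂ w₃,
    E_val w₁ w₂ w₃ h12 h13 h23 1 (Or.inl rfl), E_val w₁ w₂ w₃ h12 h13 h23 (-1) (Or.inr rfl),
    D_val w₁ w₂ w₃ h12 h13 h23 1 (Or.inl rfl), D_val w₁ w₂ w₃ h12 h13 h23 (-1) (Or.inr rfl)]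
  rw [shr, shr, shr, if_neg (sub_ne_zero.mpr h12), if_neg (sub_ne_zero.mpr h13),
    if_neg (sub_ne_zero.mpr h23), sinh_form w₁ w₂, sinh_form w₁ w₃, sinh_form w₂ w₃]
  norm_num
  have e1 := Real.exp_ne_zero w₁
  have e2 := Real.exp_ne_zero w₂
  have e3 := Real.exp_ne_zero w₃
  have d12 : Real.exp w₁ ^ 2 - Real.exp w₂ ^ 2 ≠ 0 := sub_ne_zero.mpr (exp_sq_ne h12)
  have d13 : Real.exp w₁ ^ 2 - Real.exp w₃ ^ 2 ≠ 0 := sub_ne_zero.mpr (exp_sq_ne h13)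
  have d23 : Real.exp w₂ ^ 2 - Real.exp w₃ ^ 2 ≠ 0 := sub_ne_zero.mpr (exp_sq_ne h23)
  have d21 : Real.exp w₂ ^ 2 - Real.exp w₁ ^ 2 ≠ 0 := sub_ne_zero.mpr (exp_sq_ne (Ne.symm h12))
  have d31 : Real.exp w₃ ^ 2 - Real.exp w₁ ^ 2 ≠ 0 := sub_ne_zero.mpr (exp_sq_ne (Ne.symm h13))
  have d32 : Real.exp w₃ ^ 2 - Real.exp w₂ ^ 2 ≠ 0 := sub_ne_zero.mpr (exp_sq_ne (Ne.symm h23))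
  unfold qc qd cC dC
  field_simp
  ring

/-! ### continuity of shr -/

lemma continuousAt_shr (x : ℝ) : ContinuousAt shr x := by
  rcases eq_or_ne x 0 with rfl | hx
  · have h1 : Tendsto (fun y : ℝ => Real.sinh y / y) (nhdsWithin 0 {(0:ℝ)}ᶜ) (nhds 1) := by
      have := (Real.hasDerivAt_sinh 0)
      rw [hasDerivAt_iff_tendsto_slope] at this
      rw [Real.cosh_zero] at this
      refine this.congr (fun y => ?_)
      simp [slope_def_field]
    have h2 : Tendsto (fun y : ℝ => y / Real.sinh y) (nhdsWithin 0 {(0:ℝ)}ᶜ) (nhds 1) := by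
      have h3 := (h1.inv₀ one_ne_zero)
      rw [inv_one] at h3
      refine h3.congr (fun y => ?_)
      rw [inv_div]
    have h4 : Tendsto shr (nhdsWithin 0 {(0:ℝ)}ᶜ) (nhds 1) := by
      refine h2.congr' ?_
      filter_upwards [self_mem_nhdsWithin] with y hy
      unfold shr
      rw [if_neg (show ¬ y = 0 by simpa using hy)]
    rw [ContinuousAt]
    have hshr0 : shr 0 = 1 := by unfold shr; rw [if_pos rfl]
    rw [hshr0]
    rw [← nhdsNE_sup_pure (0:ℝ)]
    rw [tendsto_sup]
    refine ⟨h4, ?_⟩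
    rw [tendsto_pure_left]
    intro s hs
    rw [show shr 0 = 1 from by unfold shr; rw [if_pos rfl]]
    exact mem_of_mem_nhds hs
  · have hs : Real.sinh x ≠ 0 := fun h => hx (Real.sinh_eq_zero.mp h)
    have : ContinuousAt (fun y : ℝ => y / Real.sinh y) x :=
      (continuousAt_id.div (Real.continuous_sinh.continuousAt) hs)
    refine this.congr ?_
    filter_upwards [isOpen_compl_singleton.mem_nhds hx] with y hy
    unfold shr
    rw [if_neg (show ¬ y = 0 by simpa using hy)]

/-! ### continuity of the LHS -/

lemma abs_sinh_le (x : ℝ) : |Real.sinh x| ≤ Real.exp |x| := by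
  rw [Real.abs_sinh, Real.sinh_eq]
  have h1 := Real.exp_pos (-|x|)
  have h2 := Real.exp_pos (|x|)
  linarith

noncomputable def B2fun (w : ℝ × ℝ × ℝ) : ℝ :=
  ∫ v : ℝ × ℝ, (v.1 - v.2) * Real.sinh (v.1 - v.2) /
      ((Real.cosh (w.1 - v.1) * Real.cosh (w.1 - v.2)) *
       (Real.cosh (w.2.1 - v.1) * Real.cosh (w.2.1 - v.2)) *
       (Real.cosh (w.2.2 - v.1) * Real.cosh (w.2.2 - v.2)))

lemma F_bound (w₁ w₂ w₃ z₁ z₂ : ℝ) :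
    |(z₁ - z₂) * Real.sinh (z₁ - z₂) /
        ((Real.cosh (w₁ - z₁) * Real.cosh (w₁ - z₂)) *
         (Real.cosh (w₂ - z₁) * Real.cosh (w₂ - z₂)) *
         (Real.cosh (w₃ - z₁) * Real.cosh (w₃ - z₂)))|
      ≤ 64 * Real.exp (2*(|w₁|+|w₂|+|w₃|)) * (Real.exp (-(1*|z₁|)) * Real.exp (-(1*|z₂|))) := by
  have hre : (Real.cosh (w₁ - z₁) * Real.cosh (w₁ - z₂)) *
         (Real.cosh (w₂ - z₁) * Real.cosh (w₂ - z₂)) *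
         (Real.cosh (w₃ - z₁) * Real.cosh (w₃ - z₂))
      = Dcosh w₁ w₂ w₃ z₁ * Dcosh w₁ w₂ w₃ z₂ := by
    unfold Dcosh; ring
  rw [hre]
  have hD1 := Dcosh_pos w₁ w₂ w₃ z₁
  have hD2 := Dcosh_pos w₁ w₂ w₃ z₂
  rw [abs_div, abs_of_pos (mul_pos hD1 hD2)]
  have hnum : |(z₁ - z₂) * Real.sinh (z₁ - z₂)| ≤ Real.exp (2*|z₁| + 2*|z₂|) := by
    rw [abs_mul]
    have h1 : |z₁ - z₂| ≤ Real.exp (|z₁| + |z₂|) := by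
      have : |z₁ - z₂| ≤ |z₁| + |z₂| := abs_sub _ _
      refine this.trans ?_
      have := Real.add_one_le_exp (|z₁| + |z₂|)
      linarith [abs_nonneg z₁, abs_nonneg z₂]
    have h2 : |Real.sinh (z₁ - z₂)| ≤ Real.exp (|z₁| + |z₂|) := by
      refine (abs_sinh_le _).trans (Real.exp_le_exp.mpr ?_)
      exact (abs_sub _ _)
    calc |z₁ - z₂| * |Real.sinh (z₁ - z₂)|
        ≤ Real.exp (|z₁| + |z₂|) * Real.exp (|z₁| + |z₂|) :=
          mul_le_mul h1 h2 (abs_nonneg _) (Real.exp_pos _).le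
      _ = Real.exp (2*|z₁| + 2*|z₂|) := by rw [← Real.exp_add]; congr 1; ring
  have hden : Real.exp (3*|z₁| + 3*|z₂| - 2*(|w₁|+|w₂|+|w₃|)) / 64
      ≤ Dcosh w₁ w₂ w₃ z₁ * Dcosh w₁ w₂ w₃ z₂ := by
    have l1 := Dcosh_lower w₁ w₂ w₃ z₁
    have l2 := Dcosh_lower w₁ w₂ w₃ z₂
    calc Real.exp (3*|z₁| + 3*|z₂| - 2*(|w₁|+|w₂|+|w₃|)) / 64
        = (Real.exp (3*|z₁| - (|w₁|+|w₂|+|w₃|))/8) * (Real.exp (3*|z₂| - (|w₁|+|w₂|+|w₃|))/8) := by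
          rw [show 3*|z₁| + 3*|z₂| - 2*(|w₁|+|w₂|+|w₃|)
            = (3*|z₁| - (|w₁|+|w₂|+|w₃|)) + (3*|z₂| - (|w₁|+|w₂|+|w₃|)) by ring, Real.exp_add]
          ring
      _ ≤ Dcosh w₁ w₂ w₃ z₁ * Dcosh w₁ w₂ w₃ z₂ := by
          exact mul_le_mul l1 l2 (by positivity) hD1.le
  calc |(z₁ - z₂) * Real.sinh (z₁ - z₂)| / (Dcosh w₁ w₂ w₃ z₁ * Dcosh w₁ w₂ w₃ z₂)
      ≤ Real.exp (2*|z₁| + 2*|z₂|) / (Real.exp (3*|z₁| + 3*|z₂| - 2*(|w₁|+|w₂|+|w₃|)) / 64) :=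
        div_le_div₀ (Real.exp_pos _).le hnum (by positivity) hden
    _ = 64 * (Real.exp (2*|z₁| + 2*|z₂|) / Real.exp (3*|z₁| + 3*|z₂| - 2*(|w₁|+|w₂|+|w₃|))) := by
        rw [div_div_eq_mul_div]; ring
    _ = 64 * Real.exp ((2*|z₁| + 2*|z₂|) - (3*|z₁| + 3*|z₂| - 2*(|w₁|+|w₂|+|w₃|))) := by
        rw [Real.exp_sub (2*|z₁| + 2*|z₂|)]
    _ = 64 * Real.exp (2*(|w₁|+|w₂|+|w₃|)) * (Real.exp (-(1*|z₁|)) * Real.exp (-(1*|z₂|))) := by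
        rw [show (2*|z₁| + 2*|z₂|) - (3*|z₁| + 3*|z₂| - 2*(|w₁|+|w₂|+|w₃|))
          = 2*(|w₁|+|w₂|+|w₃|) + (-(1*|z₁|) + -(1*|z₂|)) by ring, Real.exp_add, Real.exp_add]
        ring

lemma continuousAt_B2fun (w₀ : ℝ × ℝ × ℝ) : ContinuousAt B2fun w₀ := by
  set M : ℝ := |w₀.1| + |w₀.2.1| + |w₀.2.2| + 3 with hM
  have hball : ∀ w : ℝ × ℝ × ℝ, dist w w₀ < 1 → |w.1| + |w.2.1| + |w.2.2| ≤ M := by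
    intro w hw
    rw [Prod.dist_eq] at hw
    rw [Prod.dist_eq] at hw
    simp only [sup_lt_iff] at hw
    obtain ⟨h1, h2, h3⟩ := hw
    rw [Real.dist_eq] at h1 h2 h3
    have a1 := abs_sub_abs_le_abs_sub w.1 w₀.1
    have a2 := abs_sub_abs_le_abs_sub w.2.1 w₀.2.1
    have a3 := abs_sub_abs_le_abs_sub w.2.2 w₀.2.2
    rw [hM]; linarith
  refine continuousAt_of_dominated (bound := fun z : ℝ × ℝ =>
    64 * Real.exp (2*M) * (Real.exp (-(1*|z.1|)) * Real.exp (-(1*|z.2|)))) ?_ ?_ ?_ ?_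
  · filter_upwards with w
    refine Continuous.aestronglyMeasurable ?_
    apply Continuous.div
    · fun_prop
    · fun_prop
    · intro z
      have c1 := Real.cosh_pos (x := w.1 - z.1)
      have c2 := Real.cosh_pos (x := w.1 - z.2)
      have c3 := Real.cosh_pos (x := w.2.1 - z.1)
      have c4 := Real.cosh_pos (x := w.2.1 - z.2)
      have c5 := Real.cosh_pos (x := w.2.2 - z.1)
      have c6 := Real.cosh_pos (x := w.2.2 - z.2)
      positivity
  · filter_upwards [Metric.ball_mem_nhds w₀ one_pos] with w hw
    refine Eventually.of_forall (fun z => ?_)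
    rw [Real.norm_eq_abs]
    refine (F_bound w.1 w.2.1 w.2.2 z.1 z.2).trans ?_
    have := hball w (by rwa [Metric.mem_ball] at hw)
    have hmono : Real.exp (2*(|w.1|+|w.2.1|+|w.2.2|)) ≤ Real.exp (2*M) :=
      Real.exp_le_exp.mpr (by linarith)
    have hpos : (0:ℝ) ≤ Real.exp (-(1*|z.1|)) * Real.exp (-(1*|z.2|)) := by positivity
    nlinarith [Real.exp_pos (2*M), Real.exp_pos (2*(|w.1|+|w.2.1|+|w.2.2|))]
  · refine (Integrable.const_mul ?_ _)
    exact ((integrable_exp_neg_abs one_pos).mul_prod (integrable_exp_neg_abs one_pos))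
  · refine Eventually.of_forall (fun z => ?_)
    apply ContinuousAt.div
    · fun_prop
    · fun_prop
    · have c1 := Real.cosh_pos (x := w₀.1 - z.1)
      have c2 := Real.cosh_pos (x := w₀.1 - z.2)
      have c3 := Real.cosh_pos (x := w₀.2.1 - z.1)
      have c4 := Real.cosh_pos (x := w₀.2.1 - z.2)
      have c5 := Real.cosh_pos (x := w₀.2.2 - z.1)
      have c6 := Real.cosh_pos (x := w₀.2.2 - z.2)
      positivity

lemma ev_ne (c : ℝ) : ∀ᶠ t in nhdsWithin (0:ℝ) {(0:ℝ)}ᶜ, t ≠ c := by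
  rcases eq_or_ne c 0 with rfl | hc
  · exact eventually_mem_nhdsWithin
  · refine eventually_nhdsWithin_of_eventually_nhds ?_
    filter_upwards [isOpen_compl_singleton.mem_nhds (by simpa using hc.symm : (0:ℝ) ∈ {c}ᶜ)]
      with t ht
    simpa using ht

/-- Evaluation of the integral
`B₂(w) = ∫_{ℝ²} (v₁−v₂) sinh(v₁−v₂) / ∏_{j=1}^3 ∏_{k=1}^2 cosh(w_j−v_k) dv`. -/
theorem B2_eval (w₁ w₂ w₃ : ℝ) :
    ∫ v : ℝ × ℝ, (v.1 - v.2) * Real.sinh (v.1 - v.2) /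
        ((Real.cosh (w₁ - v.1) * Real.cosh (w₁ - v.2)) *
         (Real.cosh (w₂ - v.1) * Real.cosh (w₂ - v.2)) *
         (Real.cosh (w₃ - v.1) * Real.cosh (w₃ - v.2)))
      = 4 * (shr (w₁ - w₂) * shr (w₁ - w₃) * shr (w₂ - w₃)) := by
  set γ : ℝ → ℝ × ℝ × ℝ := fun t => (w₁ + t, w₂ + 2*t, w₃ + 4*t) with hγ
  set R : (ℝ × ℝ × ℝ) → ℝ := fun w =>
    4 * (shr (w.1 - w.2.1) * shr (w.1 - w.2.2) * shr (w.2.1 - w.2.2)) with hR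
  have hγc : Continuous γ := by rw [hγ]; fun_prop
  have hγ0 : γ 0 = (w₁, w₂, w₃) := by rw [hγ]; norm_num
  have hLc' : ContinuousAt (B2fun ∘ γ) 0 := by
    apply ContinuousAt.comp
    · rw [hγ0]; exact continuousAt_B2fun _
    · exact hγc.continuousAt
  have hLc : ContinuousAt (fun t => B2fun (γ t)) 0 := hLc'
  have s1 : ContinuousAt (fun w : ℝ × ℝ × ℝ => shr (w.1 - w.2.1)) (w₁, w₂, w₃) :=
    ContinuousAt.comp (continuousAt_shr _) (by fun_prop)
  have s2 : ContinuousAt (fun w : ℝ × ℝ × ℝ => shr (w.1 - w.2.2)) (w₁, w₂, w₃) :=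
    ContinuousAt.comp (continuousAt_shr _) (by fun_prop)
  have s3 : ContinuousAt (fun w : ℝ × ℝ × ℝ => shr (w.2.1 - w.2.2)) (w₁, w₂, w₃) :=
    ContinuousAt.comp (continuousAt_shr _) (by fun_prop)
  have hRc0 : ContinuousAt R (w₁, w₂, w₃) := by
    rw [hR]
    exact continuousAt_const.mul ((s1.mul s2).mul s3)
  have hRc' : ContinuousAt (R ∘ γ) 0 := by
    apply ContinuousAt.comp
    · rw [hγ0]; exact hRc0
    · exact hγc.continuousAt
  have hRc : ContinuousAt (fun t => R (γ t)) 0 := hRc'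
  have heq : ∀ᶠ t in nhdsWithin (0:ℝ) {(0:ℝ)}ᶜ, B2fun (γ t) = R (γ t) := by
    filter_upwards [ev_ne (w₁ - w₂), ev_ne ((w₁ - w₃)/3), ev_ne ((w₂ - w₃)/2)] with t h1 h2 h3
    have d1 : w₁ + t ≠ w₂ + 2*t := fun h => h1 (by linarith)
    have d2 : w₁ + t ≠ w₃ + 4*t := fun h => h2 (by linarith)
    have d3 : w₂ + 2*t ≠ w₃ + 4*t := fun h => h3 (by linarith)
    have hB := B2_distinct (w₁ + t) (w₂ + 2*t) (w₃ + 4*t) d1 d2 d3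
    rw [hγ, hR]
    simpa [B2fun] using hB
  have hu := tendsto_nhds_unique
    ((hLc.tendsto.mono_left nhdsWithin_le_nhds).congr' heq)
    (hRc.tendsto.mono_left nhdsWithin_le_nhds)
  rw [hγ0] at hu
  have hfin : B2fun (w₁, w₂, w₃) = R (w₁, w₂, w₃) := hu
  rw [hR] at hfin
  simpa [B2fun] using hfin
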